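/- There exists a constant c > 1 such that for every q ≥ 2 and every rich word w of length n ≥ 2 over a q-letter alphabet, the number p of palindromes in the UPS-factorization of w satisfies p ≤ c·n/ln n; explicitly one may take c = max{8 q^{3/2} ln q, 8·9^{3/2} ln 9}. -/

import Mathlib

/-- A word is rich if it has exactly `length + 1` distinct palindromic factors. -/
def Rich {A : Type*} (u : List A) : Prop :=
  {v : List A | v <:+: u ∧ v.reverse = v}.ncard = u.length + 1

/-- `UPSFactorization l w` : `l = [w_p, …, w_1]` is a factorization of `w` into distinct
nonempty palindromes such that each `w_i` is the longest palindromic suffix of `w_p ⋯ w_i`. -/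
def UPSFactorization {A : Type*} (l : List (List A)) (w : List A) : Prop :=
  l.flatten = w ∧ [] ∉ l ∧ l.Nodup ∧
  (∀ i : Fin l.length, (l.get i).reverse = l.get i) ∧
  ∀ i : Fin l.length, ∀ v : List A,
    v <:+ (l.take (i + 1)).flatten → v.reverse = v → v.length ≤ (l.get i).length

/-- A palindrome is determined by its length and its first half. -/
lemma pal_eq {A : Type*} (v : List A) (hp : v.reverse = v) (K : ℕ) (hK : v.length ≤ 2*K) :
    v = v.take K ++ ((v.take K).take (v.length - K)).reverse := by
  rcases le_or_gt v.length K with h | h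
  · rw [List.take_of_length_le h, Nat.sub_eq_zero_of_le h]
    simp
  · have h1 : (v.take K).take (v.length - K) = v.take (v.length - K) := by
      rw [List.take_take]
      congr 1
      omega
    rw [h1]
    have h2 : (v.take (v.length - K)).reverse = v.drop K := by
      rw [List.reverse_take, hp]
      congr 1
      omega
    rw [h2, List.take_append_drop]

lemma enc_inj {A : Type*} [Inhabited A] (K : ℕ) (u v : List A)
    (hu : u.reverse = u) (hv : v.reverse = v) (hul : u.length ≤ 2*K) (hvl : v.length ≤ 2*K)
    (hlen : u.length = v.length) (hget : ∀ j : Fin K, u.getD j default = v.getD j default) :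
    u = v := by
  have htake : u.take K = v.take K := by
    apply List.ext_getElem
    · simp [hlen]
    · intro i h1 h2
      have hiK : i < K := by simp at h1; omega
      have hiu : i < u.length := by simp at h1; omega
      have hiv : i < v.length := by simp at h2; omega
      have := hget ⟨i, hiK⟩
      simp only [List.getD_eq_getElem?_getD, List.getElem?_eq_getElem hiu,
        List.getElem?_eq_getElem hiv] at this
      simpa using this
  rw [pal_eq u hu K hul, pal_eq v hv K hvl, htake, hlen]

/-- At most `m * q ^ ⌈m/2⌉` of the parts have length at most `m`. -/
lemma count_short (q m : ℕ) (l : List (List (Fin q))) (hq : 2 ≤ q)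
    (hnd : l.Nodup) (hne : [] ∉ l) (hpal : ∀ v ∈ l, v.reverse = v) :
    (l.filter (fun v => v.length ≤ m)).length ≤ m * q ^ ((m+1)/2) := by
  classical
  haveI : Inhabited (Fin q) := ⟨⟨0, by omega⟩⟩
  set K := (m+1)/2 with hKdef
  have hmK : m ≤ 2*K := by omega
  set S := l.filter (fun v => v.length ≤ m) with hS
  have hSnd : S.Nodup := hnd.filter _
  have hcard : S.toFinset.card = S.length := List.toFinset_card_of_nodup hSnd
  rw [← hcard]
  have : S.toFinset.card ≤ ((Finset.Icc 1 m) ×ˢ (Finset.univ : Finset (Fin K → Fin q))).card := by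
    apply Finset.card_le_card_of_injOn (fun v => (v.length, fun j : Fin K => v.getD j default))
    · intro v hv
      simp only [Finset.mem_coe, List.mem_toFinset, hS, List.mem_filter, decide_eq_true_eq] at hv
      obtain ⟨hvl, hvm⟩ := hv
      have : v ≠ [] := fun h => hne (h ▸ hvl)
      have hpos : 1 ≤ v.length := List.length_pos_iff.mpr this
      simp [Finset.mem_product, Finset.mem_Icc, hpos, hvm]
    · intro u hu v hv heq
      simp only [Finset.mem_coe, List.mem_toFinset, hS, List.mem_filter,
        decide_eq_true_eq] at hu hv
      have h1 : u.length = v.length := congrArg Prod.fst heq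
      have h2 : ∀ j : Fin K, u.getD j default = v.getD j default := fun j =>
        congrFun (congrArg Prod.snd heq) j
      have humK : u.length ≤ 2*K := le_trans hu.2 hmK
      have hvmK : v.length ≤ 2*K := le_trans hv.2 hmK
      exact enc_inj K u v (hpal u hu.1) (hpal v hv.1) humK hvmK h1 h2
  refine this.trans ?_
  rw [Finset.card_product, Nat.card_Icc]
  simp [Fintype.card_fun]

lemma sum_ge_of_forall_ge (a : ℕ) (L : List ℕ) (h : ∀ x ∈ L, a ≤ x) :
    L.length * a ≤ L.sum := by
  induction L with
  | nil => simp
  | cons x xs ih =>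
    simp only [List.length_cons, List.sum_cons, Nat.succ_mul]
    have := ih (fun y hy => h y (List.mem_cons_of_mem x hy))
    have := h x List.mem_cons_self
    omega

lemma count_long (q m : ℕ) (l : List (List (Fin q))) :
    (l.filter (fun v => ¬ v.length ≤ m)).length * (m+1) ≤ l.flatten.length := by
  rw [List.length_flatten]
  calc (l.filter (fun v => ¬ v.length ≤ m)).length * (m+1)
      ≤ ((l.filter (fun v => ¬ v.length ≤ m)).map List.length).sum := by
        rw [← List.length_map List.length]
        apply sum_ge_of_forall_ge
        intro x hx
        simp only [List.mem_map, List.mem_filter, decide_eq_true_eq] at hx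
        obtain ⟨v, ⟨_, hv⟩, rfl⟩ := hx
        simp at hv
        omega
    _ ≤ (l.map List.length).sum := by
        apply List.Sublist.sum_le_sum
        · exact ((l.filter_sublist).map List.length)
        · intro x _; omega

lemma parts_le_flatten (q : ℕ) (l : List (List (Fin q))) (hne : [] ∉ l) :
    l.length ≤ l.flatten.length := by
  rw [List.length_flatten]
  calc l.length = (l.map List.length).length * 1 := by simp
    _ ≤ (l.map List.length).sum := by
        apply sum_ge_of_forall_ge
        intro x hx
        simp only [List.mem_map] at hx
        obtain ⟨v, hv, rfl⟩ := hx
        have : v ≠ [] := fun h => hne (h ▸ hv)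
        exact List.length_pos_iff.mpr this

lemma filter_split (q m : ℕ) (l : List (List (Fin q))) :
    l.length = (l.filter (fun v => v.length ≤ m)).length
      + (l.filter (fun v => ¬ v.length ≤ m)).length := by
  have := List.length_eq_length_filter_add (l := l) (fun v => v.length ≤ m)
  simpa only [decide_not] using this

lemma exp_ge_pow4 {L : ℝ} (hL : 64 ≤ L) : L^4 ≤ Real.exp L := by
  set t := L / 8 with ht
  have ht8 : 8 ≤ t := by rw [ht]; linarith
  have h1 : t ≤ Real.exp t := by nlinarith [Real.add_one_le_exp t]
  have h2 : t^8 ≤ (Real.exp t)^8 := pow_le_pow_left₀ (by linarith) h1 8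
  have h3 : Real.exp L = (Real.exp t)^8 := by
    rw [← Real.exp_nat_mul]
    congr 1
    push_cast
    rw [ht]; ring
  have h4 : t^4 ≥ 4096 := by
    have h8 : (8:ℝ)^4 ≤ t^4 := pow_le_pow_left₀ (by norm_num) ht8 4
    norm_num at h8
    linarith
  have h5 : L^4 = 4096 * t^4 := by rw [ht]; ring
  nlinarith [pow_nonneg (show (0:ℝ) ≤ t by linarith) 4]

lemma nine_rpow : (9:ℝ)^((3:ℝ)/2) = 27 := by
  have h1 : (9:ℝ) = 3^(2:ℕ) := by norm_num
  rw [h1, ← Real.rpow_natCast 3 2, ← Real.rpow_mul (by norm_num)]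
  rw [show ((2:ℕ):ℝ) * ((3:ℝ)/2) = ((3:ℕ):ℝ) by push_cast; ring, Real.rpow_natCast]
  norm_num

lemma log_nine : (2:ℝ) ≤ Real.log 9 := by
  rw [Real.le_log_iff_exp_le (by norm_num)]
  have h := Real.exp_one_lt_d9
  have h0 := Real.exp_pos 1
  calc Real.exp 2 = Real.exp 1 * Real.exp 1 := by rw [← Real.exp_add]; norm_num
    _ ≤ 9 := by nlinarith

lemma term1_aux {L S N E : ℝ} (hS : 0 ≤ S) (hL2 : L^2 ≤ S) (hN : S * S = N) (hE : 1 ≤ E) :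
    L * S * L ≤ E * N := by
  nlinarith [mul_le_mul_of_nonneg_right hL2 hS]

lemma const_aux {a Q : ℝ} (ha : 2 ≤ a) (hQ : 0.69 ≤ Q) : 1 ≤ (8*a*Q - 2*Q)*Q := by
  have h2 : (0.4761:ℝ) ≤ Q*Q := by nlinarith
  have h1 : (14:ℝ) ≤ 8*a-2 := by linarith
  nlinarith [mul_le_mul h1 h2 (by norm_num) (by linarith)]

theorem UPS_parts_le_const_mul_div_log (q : ℕ) (hq : 2 ≤ q) :
    ∃ c : ℝ, 1 < c ∧
      c = max (8 * (q : ℝ) ^ ((3 : ℝ) / 2) * Real.log q)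
              (8 * (9 : ℝ) ^ ((3 : ℝ) / 2) * Real.log 9) ∧
      ∀ w : List (Fin q), Rich w → 2 ≤ w.length →
        ∀ l : List (List (Fin q)), UPSFactorization l w →
          (l.length : ℝ) ≤ c * w.length / Real.log w.length := by
  classical
  set c := max (8 * (q : ℝ) ^ ((3 : ℝ) / 2) * Real.log q)
      (8 * (9 : ℝ) ^ ((3 : ℝ) / 2) * Real.log 9) with hc
  have hc432 : (432:ℝ) ≤ c := by
    refine le_trans ?_ (le_max_right _ _)
    rw [nine_rpow]
    nlinarith [log_nine]
  refine ⟨c, by linarith, hc, ?_⟩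
  intro w _ hw2 l hUPS
  obtain ⟨hflat, hne, hnd, hpalget, -⟩ := hUPS
  have hpal : ∀ v ∈ l, v.reverse = v := by
    intro v hv
    obtain ⟨i, rfl⟩ := List.mem_iff_get.mp hv
    exact hpalget i
  have hN2 : (2:ℝ) ≤ (w.length : ℝ) := by exact_mod_cast hw2
  have hN0 : (0:ℝ) < (w.length : ℝ) := by linarith
  set L := Real.log (w.length : ℝ) with hLdef
  have hL0 : 0 < L := Real.log_pos (by linarith)
  set Q := Real.log (q : ℝ) with hQdef
  have hq2 : (2:ℝ) ≤ (q:ℝ) := by exact_mod_cast hq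
  have hQ0 : 0 < Q := Real.log_pos (by linarith)
  have hQ2 : Real.log 2 ≤ Q := Real.log_le_log (by norm_num) hq2
  have hlog2 : (0.6931471803:ℝ) < Real.log 2 := Real.log_two_gt_d9
  have hq32 : (2:ℝ) ≤ (q:ℝ)^((3:ℝ)/2) := by
    calc (2:ℝ) ≤ (q:ℝ) := hq2
      _ = (q:ℝ)^(1:ℝ) := (Real.rpow_one _).symm
      _ ≤ (q:ℝ)^((3:ℝ)/2) := Real.rpow_le_rpow_of_exponent_le (by linarith) (by norm_num)
  have hcq : 8 * (q:ℝ)^((3:ℝ)/2) * Q ≤ c := le_max_left _ _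
  have hpn : l.length ≤ w.length := by
    have := parts_le_flatten q l hne
    rwa [hflat] at this
  by_cases hcase : L ≤ c
  · have h1 : (l.length:ℝ) ≤ (w.length:ℝ) := by exact_mod_cast hpn
    rw [le_div_iff₀ hL0]
    calc (l.length:ℝ) * L ≤ (w.length:ℝ) * c :=
          mul_le_mul h1 hcase hL0.le (by linarith)
      _ = c * (w.length:ℝ) := mul_comm _ _
  · push_neg at hcase
    set m1 := Nat.floor (L / Q) with hm1def
    have hLQ16 : (16:ℝ) ≤ L / Q := by
      rw [le_div_iff₀ hQ0]
      nlinarith [mul_le_mul_of_nonneg_right hq32 hQ0.le, hcq, hcase]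
    have hm116 : 16 ≤ m1 := Nat.le_floor (by exact_mod_cast hLQ16)
    set m := m1 - 1 with hmdef
    have hmm : m + 1 = m1 := by omega
    set K := (m+1)/2 with hKdef
    have hshort := count_short q m l hq hnd hne hpal
    have hlong := count_long q m l
    rw [hflat] at hlong
    have hsplit := filter_split q m l
    have hm1pos : (0:ℝ) < (m1:ℝ) := by
      have : (16:ℝ) ≤ (m1:ℝ) := by exact_mod_cast hm116
      linarith
    have ht : ((l.filter (fun v => ¬ v.length ≤ m)).length : ℝ) ≤ (w.length:ℝ) / m1 := by
      rw [le_div_iff₀ hm1pos]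
      have h2 : (((l.filter (fun v => ¬ v.length ≤ m)).length * (m+1) : ℕ) : ℝ)
          ≤ (w.length:ℝ) := by exact_mod_cast hlong
      push_cast [hmm] at h2 ⊢
      linarith
    have hp : (l.length:ℝ) ≤ (m:ℝ) * (q:ℝ)^K + (w.length:ℝ) / m1 := by
      have hs : ((l.filter (fun v => v.length ≤ m)).length : ℝ) ≤ (m:ℝ) * (q:ℝ)^K := by
        exact_mod_cast hshort
      have h3 : (l.length:ℝ) = ((l.filter (fun v => v.length ≤ m)).length : ℝ)
          + ((l.filter (fun v => ¬ v.length ≤ m)).length : ℝ) := by exact_mod_cast hsplit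
      linarith
    have hqm1 : ((q:ℝ))^m1 ≤ (w.length:ℝ) := by
      have h1 : (m1:ℝ) ≤ L / Q := Nat.floor_le (by positivity)
      have h2 : (m1:ℝ) * Q ≤ L := (le_div_iff₀ hQ0).mp h1
      have h3 : Real.log ((q:ℝ)^m1) ≤ Real.log (w.length:ℝ) := by
        rw [Real.log_pow]
        exact h2
      exact (Real.log_le_log_iff (by positivity) hN0).mp h3
    have h2K : 2*K ≤ m1 := by omega
    have hqK : ((q:ℝ))^K ≤ Real.sqrt (w.length:ℝ) := by
      rw [Real.le_sqrt (by positivity) (by positivity)]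
      calc ((q:ℝ)^K)^2 = (q:ℝ)^(2*K) := by rw [← pow_mul]; ring_nf
        _ ≤ (q:ℝ)^m1 := pow_le_pow_right₀ (by linarith) h2K
        _ ≤ (w.length:ℝ) := hqm1
    have hL432 : (432:ℝ) ≤ L := le_of_lt (lt_of_le_of_lt hc432 hcase)
    have hexp : L^4 ≤ (w.length:ℝ) := by
      have h := exp_ge_pow4 (L := L) (by linarith)
      rwa [hLdef, Real.exp_log hN0] at h
    have hLsq : L^2 ≤ Real.sqrt (w.length:ℝ) := by
      rw [Real.le_sqrt (by positivity) (by positivity)]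
      calc (L^2)^2 = L^4 := by ring
        _ ≤ _ := hexp
    have hsqrt : Real.sqrt (w.length:ℝ) * Real.sqrt (w.length:ℝ) = (w.length:ℝ) :=
      Real.mul_self_sqrt (le_of_lt hN0)
    have hsN : 0 ≤ Real.sqrt (w.length:ℝ) := Real.sqrt_nonneg _
    have hmLQ : (m:ℝ) ≤ L / Q := by
      have h1 : (m:ℝ) ≤ (m1:ℝ) := by
        have : m ≤ m1 := hmdef ▸ Nat.sub_le m1 1
        exact_mod_cast this
      exact le_trans h1 (Nat.floor_le (by positivity))
    have hm1low : L ≤ 2*Q*(m1:ℝ) := by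
      have h1 : L / Q < (m1:ℝ) + 1 := Nat.lt_floor_add_one (L/Q)
      have h2 : L < ((m1:ℝ) + 1) * Q := by
        rw [div_lt_iff₀ hQ0] at h1
        linarith
      have h16 : (16:ℝ) ≤ (m1:ℝ) := by exact_mod_cast hm116
      have h3 : ((m1:ℝ)+1)*Q ≤ 2*(m1:ℝ)*Q :=
        mul_le_mul_of_nonneg_right (by linarith) hQ0.le
      linarith
    have hterm2 : (w.length:ℝ)/m1 ≤ 2*Q*(w.length:ℝ)/L := by
      rw [div_le_div_iff₀ hm1pos hL0]
      calc (w.length:ℝ) * L ≤ (w.length:ℝ) * (2*Q*(m1:ℝ)) :=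
            mul_le_mul_of_nonneg_left hm1low hN0.le
        _ = 2*Q*(w.length:ℝ)*(m1:ℝ) := by ring
    have hE : 1 ≤ (8*(q:ℝ)^((3:ℝ)/2)*Q - 2*Q) * Q :=
      const_aux hq32 (by linarith)
    have hterm1 : (m:ℝ) * (q:ℝ)^K ≤ (8*(q:ℝ)^((3:ℝ)/2)*Q - 2*Q) * (w.length:ℝ) / L := by
      calc (m:ℝ)*(q:ℝ)^K ≤ (L/Q) * Real.sqrt (w.length:ℝ) := by
            apply mul_le_mul hmLQ hqK (by positivity) (by positivity)
        _ ≤ (8*(q:ℝ)^((3:ℝ)/2)*Q - 2*Q) * (w.length:ℝ) / L := by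
            rw [div_mul_eq_mul_div, div_le_div_iff₀ hQ0 hL0]
            have key := term1_aux hsN hLsq hsqrt hE
            calc L * Real.sqrt (w.length:ℝ) * L
                ≤ ((8*(q:ℝ)^((3:ℝ)/2)*Q - 2*Q)*Q) * (w.length:ℝ) := key
              _ = (8*(q:ℝ)^((3:ℝ)/2)*Q - 2*Q) * (w.length:ℝ) * Q := by ring
    calc (l.length:ℝ) ≤ (m:ℝ) * (q:ℝ)^K + (w.length:ℝ) / m1 := hp
      _ ≤ (8*(q:ℝ)^((3:ℝ)/2)*Q - 2*Q) * (w.length:ℝ) / L + 2*Q*(w.length:ℝ)/L :=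
          add_le_add hterm1 hterm2
      _ = (8*(q:ℝ)^((3:ℝ)/2)*Q) * (w.length:ℝ) / L := by ring
      _ ≤ c * (w.length:ℝ) / L := by
          gcongr
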